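/- Let B be a ring and S a multiplicatively closed subset such that the associated category 𝒮 is filtered. Then for s ∈ S, left multiplication l_s : B|S → B|S is injective if and only if for every b ∈ B with sb = 0 there exists t ∈ S with bt = 0 (i.e. 0 ∈ bS). -/

import Mathlib

/-! STATEMENT 2: if the category 𝒮 associated to a multiplicatively closed set S
is filtered, then for s ∈ S, left multiplication by s on the module of right
fractions B|S is injective iff (∀ b, sb = 0 → ∃ t ∈ S, bt = 0). -/

/-- The submodule of relations defining the module of right fractions. -/
noncomputable def fracRel (B : Type) [Ring B] (S : Set B) : Submodule B (↥S →₀ B) :=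
  Submodule.span B { v | ∃ (s x : B) (hs : s ∈ S) (hsx : s * x ∈ S),
    v = Finsupp.single ⟨s * x, hsx⟩ x - Finsupp.single ⟨s, hs⟩ 1 }

/-- The left `B`-module `B|S` of right fractions with denominators in `S`. -/
abbrev Frac (B : Type) [Ring B] (S : Set B) : Type :=
  (↥S →₀ B) ⧸ fracRel B S

/-- The fraction `b|s`. -/
noncomputable def fracElt (B : Type) [Ring B] (S : Set B) (b s : B) (hs : s ∈ S) :
    Frac B S :=
  Submodule.Quotient.mk (Finsupp.single ⟨s, hs⟩ b)

/-- A left `B`-module is `S`-local if every `s ∈ S` acts invertibly by left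
multiplication. -/
def SLocal (B : Type) [Ring B] (S : Set B) (N : Type) [AddCommGroup N] [Module B N] :
    Prop :=
  ∀ s ∈ S, Function.Bijective (fun n : N => s • n)

open CategoryTheory Limits

section Aux

variable (B : Type) [Ring B] (S : Set B)

lemma frac_gen_mem (b s x : B) (hs : s ∈ S) (hsx : s * x ∈ S) :
    Finsupp.single (⟨s * x, hsx⟩ : ↥S) (b * x) - Finsupp.single (⟨s, hs⟩ : ↥S) b
      ∈ fracRel B S := by
  have h : (Finsupp.single (⟨s * x, hsx⟩ : ↥S) x - Finsupp.single (⟨s, hs⟩ : ↥S) 1)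
      ∈ fracRel B S := Submodule.subset_span ⟨s, x, hs, hsx, rfl⟩
  have h2 := (fracRel B S).smul_mem b h
  simpa [smul_sub, Finsupp.smul_single, smul_eq_mul, mul_one] using h2

lemma fracElt_expand (b t x : B) (ht : t ∈ S) (htx : t * x ∈ S) :
    fracElt B S b t ht = fracElt B S (b * x) (t * x) htx := by
  unfold fracElt
  rw [eq_comm, Submodule.Quotient.eq]
  exact frac_gen_mem B S b t x ht htx

lemma fracElt_congr (b s s' : B) (h : s = s') (hs : s ∈ S) (hs' : s' ∈ S) :
    fracElt B S b s hs = fracElt B S b s' hs' := by subst h; rfl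

lemma fracElt_add (b c t : B) (ht : t ∈ S) :
    fracElt B S b t ht + fracElt B S c t ht = fracElt B S (b + c) t ht := by
  unfold fracElt
  rw [← Submodule.Quotient.mk_add, Finsupp.single_add]

lemma fracElt_zero (t : B) (ht : t ∈ S) : fracElt B S 0 t ht = 0 := by
  simp [fracElt]

lemma fracElt_smul (a b t : B) (ht : t ∈ S) :
    a • fracElt B S b t ht = fracElt B S (a * b) t ht := by
  unfold fracElt
  rw [← Submodule.Quotient.mk_smul, Finsupp.smul_single, smul_eq_mul]

/-- Surjectivity: every element of `B|S` is a fraction. -/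
lemma frac_surj (hfilt1 : ∀ s ∈ S, ∀ t ∈ S, ∃ x y : B, s * x = t * y ∧ s * x ∈ S)
    (h1 : (1 : B) ∈ S) (m : Frac B S) :
    ∃ (b t : B) (ht : t ∈ S), m = fracElt B S b t ht := by
  obtain ⟨v, rfl⟩ := Submodule.Quotient.mk_surjective _ m
  induction v using Finsupp.induction with
  | zero => exact ⟨0, 1, h1, (fracElt_zero B S 1 h1).symm⟩
  | single_add a b f _ _ ih =>
    obtain ⟨c, u, hu, hc⟩ := ih
    obtain ⟨x, y, hxy, hmem⟩ := hfilt1 a.1 a.2 u hu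
    have humem : u * y ∈ S := by rw [← hxy]; exact hmem
    have h1' : Submodule.Quotient.mk (p := fracRel B S) (Finsupp.single a b)
        = fracElt B S b a.1 a.2 := rfl
    refine ⟨b * x + c * y, a.1 * x, hmem, ?_⟩
    rw [Submodule.Quotient.mk_add, h1', hc, fracElt_expand B S b a.1 x a.2 hmem,
      fracElt_expand B S c u y hu humem,
      fracElt_congr B S (c * y) (u * y) (a.1 * x) hxy.symm humem hmem,
      fracElt_add]

/-- The filtered category `𝒮`. -/
abbrev SCat : Type := ↥S

instance : Category (SCat B S) where
  Hom s t := {x : B // s.1 * x = t.1}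
  id s := ⟨1, mul_one _⟩
  comp f g := ⟨f.1 * g.1, by rw [← mul_assoc, f.2, g.2]⟩
  id_comp f := Subtype.ext (one_mul _)
  comp_id f := Subtype.ext (mul_one _)
  assoc f g h := Subtype.ext (mul_assoc _ _ _)

lemma sCat_isFiltered
    (h1 : (1 : B) ∈ S)
    (hfilt1 : ∀ s ∈ S, ∀ t ∈ S, ∃ x y : B, s * x = t * y ∧ s * x ∈ S)
    (hfilt2 : ∀ s ∈ S, ∀ x y : B, s * x = s * y → s * x ∈ S →
        ∃ z : B, x * z = y * z ∧ s * x * z ∈ S) :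
    IsFiltered (SCat B S) where
  nonempty := ⟨⟨1, h1⟩⟩
  cocone_objs s t := by
    obtain ⟨x, y, hxy, hmem⟩ := hfilt1 s.1 s.2 t.1 t.2
    exact ⟨⟨s.1 * x, hmem⟩, ⟨x, rfl⟩, ⟨y, hxy.symm⟩, trivial⟩
  cocone_maps {s t} f g := by
    obtain ⟨z, hz, hmem⟩ := hfilt2 s.1 s.2 f.1 g.1 (f.2.trans g.2.symm)
      (by rw [f.2]; exact t.2)
    have htz : t.1 * z ∈ S := by rw [← f.2]; exact hmem
    exact ⟨⟨t.1 * z, htz⟩, ⟨z, rfl⟩, Subtype.ext hz⟩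

/-- The diagram `s ↦ B` with transition maps given by right multiplication. -/
def Fmul : SCat B S ⥤ ModuleCat B where
  obj _ := ModuleCat.of B B
  map {s t} x := ModuleCat.ofHom (LinearMap.toSpanSingleton B B x.1)
  map_id s := ModuleCat.hom_ext (LinearMap.ext fun (b : B) => mul_one b)
  map_comp f g := ModuleCat.hom_ext (LinearMap.ext fun (b : B) => (mul_assoc b f.1 g.1).symm)

/-- `B|S` as a cocone over the diagram. -/
noncomputable def fracCocone : Cocone (Fmul B S) where
  pt := ModuleCat.of B (Frac B S)
  ι :=
    { app := fun s => ModuleCat.ofHom ((fracRel B S).mkQ.comp (Finsupp.lsingle s))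
      naturality := fun s t x => ModuleCat.hom_ext <| LinearMap.ext fun (b : B) => by
        have hmem : s.1 * x.1 ∈ S := by rw [x.2]; exact t.2
        have ht' : (t : ↥S) = ⟨s.1 * x.1, hmem⟩ := Subtype.ext x.2.symm
        show Submodule.Quotient.mk (Finsupp.single t (b * x.1))
          = Submodule.Quotient.mk (Finsupp.single s b)
        rw [Submodule.Quotient.eq]
        have hg := frac_gen_mem B S b s.1 x.1 s.2 hmem
        rwa [← ht'] at hg }

/-- The descending map out of `B|S`. -/
noncomputable def fracDesc (c : Cocone (Fmul B S)) : Frac B S →ₗ[B] c.pt :=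
  (fracRel B S).liftQ (Finsupp.linearCombination B (fun a : ↥S => c.ι.app a (1 : B))) (by
    rw [fracRel, Submodule.span_le]
    rintro v ⟨s, x, hs, hsx, rfl⟩
    simp only [SetLike.mem_coe, LinearMap.mem_ker, map_sub,
      Finsupp.linearCombination_single, one_smul]
    have hw := ConcreteCategory.congr_hom (c.w (⟨x, rfl⟩ : (⟨s, hs⟩ : SCat B S) ⟶ ⟨s * x, hsx⟩)) (1 : B)
    have h2 : c.ι.app (⟨s * x, hsx⟩ : SCat B S) ((1 : B) * x) = c.ι.app ⟨s, hs⟩ (1 : B) := hw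
    rw [one_mul] at h2
    rw [sub_eq_zero, ← h2]
    have hsm := map_smul (c.ι.app (⟨s * x, hsx⟩ : SCat B S)).hom x (1 : B)
    rw [smul_eq_mul, mul_one] at hsm
    exact hsm.symm)

noncomputable def fracIsColimit : IsColimit (fracCocone B S) where
  desc c := ModuleCat.ofHom (fracDesc B S c)
  fac c s := ModuleCat.hom_ext <| LinearMap.ext fun (b : B) => by
    show fracDesc B S c (Submodule.Quotient.mk (Finsupp.single s b)) = c.ι.app s b
    rw [fracDesc, Submodule.liftQ_apply, Finsupp.linearCombination_single]
    have hsm := map_smul (c.ι.app s).hom b (1 : B)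
    rw [smul_eq_mul, mul_one] at hsm
    exact hsm.symm
  uniq c m h := by
    have hcomp : (m.hom : Frac B S →ₗ[B] c.pt).comp (fracRel B S).mkQ
        = (fracDesc B S c).comp (fracRel B S).mkQ := by
      refine Finsupp.lhom_ext fun a b => ?_
      have h1 := ConcreteCategory.congr_hom (h a) b
      have h2 : m (Submodule.Quotient.mk (Finsupp.single a b)) = c.ι.app a b := h1
      have h3 : fracDesc B S c (Submodule.Quotient.mk (Finsupp.single a b))
          = c.ι.app a b := by
        rw [fracDesc, Submodule.liftQ_apply, Finsupp.linearCombination_single]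
        have hsm := map_smul (c.ι.app a).hom b (1 : B)
        rw [smul_eq_mul, mul_one] at hsm
        exact hsm.symm
      show m (Submodule.Quotient.mk (Finsupp.single a b))
        = fracDesc B S c (Submodule.Quotient.mk (Finsupp.single a b))
      rw [h2, h3]
    refine ModuleCat.hom_ext <| LinearMap.ext fun z => ?_
    obtain ⟨v, rfl⟩ := Submodule.Quotient.mk_surjective _ z
    exact LinearMap.congr_fun hcomp v

/-- The key vanishing criterion: `b|t = 0` iff `b x = 0` for some `x` with `t x ∈ S`. -/
lemma frac_zero
    (h1 : (1 : B) ∈ S)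
    (hfilt1 : ∀ s ∈ S, ∀ t ∈ S, ∃ x y : B, s * x = t * y ∧ s * x ∈ S)
    (hfilt2 : ∀ s ∈ S, ∀ x y : B, s * x = s * y → s * x ∈ S →
        ∃ z : B, x * z = y * z ∧ s * x * z ∈ S)
    (b t : B) (ht : t ∈ S) (h : fracElt B S b t ht = 0) :
    ∃ x : B, t * x ∈ S ∧ b * x = 0 := by
  haveI : IsFiltered (SCat B S) := sCat_isFiltered B S h1 hfilt1 hfilt2
  set F := Fmul B S with hF
  have hcomp := IsColimit.comp_coconePointUniqueUpToIso_hom (fracIsColimit B S)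
    (colimit.isColimit F) ⟨t, ht⟩
  have h2 := ConcreteCategory.congr_hom hcomp b
  have happ : ((fracCocone B S).ι.app ⟨t, ht⟩ ≫
      (IsColimit.coconePointUniqueUpToIso (fracIsColimit B S)
        (colimit.isColimit F)).hom) b
      = (IsColimit.coconePointUniqueUpToIso (fracIsColimit B S)
        (colimit.isColimit F)).hom (fracElt B S b t ht) := rfl
  rw [happ, h] at h2
  erw [map_zero] at h2
  have key : colimit.ι F ⟨t, ht⟩ b = 0 := h2.symm
  obtain ⟨j, f, hf⟩ := Concrete.colimit_rep_eq_zero B F ⟨t, ht⟩ b key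
  refine ⟨f.1, by rw [f.2]; exact j.2, ?_⟩
  have : b * f.1 = 0 := by
    have := hf
    exact this
  exact this

end Aux

theorem statement2 (B : Type) [Ring B] (S : Set B)
    (h1 : (1 : B) ∈ S) (hmul : ∀ s ∈ S, ∀ t ∈ S, s * t ∈ S)
    -- filteredness of the category 𝒮 :
    (hfilt1 : ∀ s ∈ S, ∀ t ∈ S, ∃ x y : B, s * x = t * y ∧ s * x ∈ S)
    (hfilt2 : ∀ s ∈ S, ∀ x y : B, s * x = s * y → s * x ∈ S →
        ∃ z : B, x * z = y * z ∧ s * x * z ∈ S)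
    (s : B) (hs : s ∈ S) :
    Function.Injective (fun m : Frac B S => s • m) ↔
      ∀ b : B, s * b = 0 → ∃ t ∈ S, b * t = 0 := by
  constructor
  · intro hinj b hb
    have h0 : s • fracElt B S b 1 h1 = s • (0 : Frac B S) := by
      rw [fracElt_smul, hb, fracElt_zero, smul_zero]
    have := hinj h0
    obtain ⟨x, hx, hbx⟩ := frac_zero B S h1 hfilt1 hfilt2 b 1 h1 this
    exact ⟨x, by rwa [one_mul] at hx, hbx⟩
  · intro hcond
    have key : ∀ m : Frac B S, s • m = 0 → m = 0 := by
      intro m hm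
      obtain ⟨b, t, ht, rfl⟩ := frac_surj B S hfilt1 h1 m
      rw [fracElt_smul] at hm
      obtain ⟨x, htx, hx⟩ := frac_zero B S h1 hfilt1 hfilt2 (s * b) t ht hm
      rw [mul_assoc] at hx
      obtain ⟨u, hu, hbu⟩ := hcond (b * x) hx
      have htxu : t * (x * u) ∈ S := by
        rw [← mul_assoc]; exact hmul _ htx _ hu
      rw [fracElt_expand B S b t (x * u) ht htxu, ← mul_assoc, hbu, fracElt_zero]
    intro m1 m2 hm
    have : s • (m1 - m2) = 0 := by
      rw [smul_sub, sub_eq_zero]; exact hm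
    have := key _ this
    exact sub_eq_zero.mp this
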